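/- Let n, p be positive integers, A a real n×n matrix, B₁, B₂ real n×p matrices, and 0 < h < T reals. Set B = B₁ + exp(−h·A)·B₂ and G_T = ∫_0^{T−h} exp((T−t)A)·B·Bᵀ·exp((T−t)Aᵀ) dt + ∫_{T−h}^{T} exp((T−t)A)·B₁·B₁ᵀ·exp((T−t)Aᵀ) dt. Then G_T is positive definite if and only if the columns of the matrices A^i B₁ and A^i B₂ for 0 ≤ i ≤ n−1 span ℝⁿ (equivalently, the n × 2np block matrix [B₁, B₂, AB₁, AB₂, …, A^{n−1}B₁, A^{n−1}B₂] has rank n). -/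

import Mathlib

open Matrix MeasureTheory intervalIntegral

attribute [local instance] Matrix.linftyOpNormedAddCommGroup Matrix.linftyOpNormedSpace
attribute [local instance] Matrix.linftyOpNormedRing Matrix.linftyOpNormedAlgebra

open NormedSpace

namespace DelayGramian


variable {n p : ℕ}

/-- `Y ↦ (C * Y) *ᵥ x` as a continuous linear map. -/
noncomputable def clm (C : Matrix (Fin p) (Fin n) ℝ) (x : Fin n → ℝ) :
    Matrix (Fin n) (Fin n) ℝ →L[ℝ] (Fin p → ℝ) :=
  LinearMap.toContinuousLinearMap
    { toFun := fun Y => (C * Y) *ᵥ x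
      map_add' := fun Y Z => by
        show (C * (Y + Z)) *ᵥ x = (C * Y) *ᵥ x + (C * Z) *ᵥ x
        rw [Matrix.mul_add, Matrix.add_mulVec]
      map_smul' := fun c Y => by
        show (C * (c • Y)) *ᵥ x = c • ((C * Y) *ᵥ x)
        rw [Matrix.mul_smul, Matrix.smul_mulVec] }

@[simp] lemma clm_apply (C : Matrix (Fin p) (Fin n) ℝ) (x : Fin n → ℝ)
    (Y : Matrix (Fin n) (Fin n) ℝ) : clm C x Y = (C * Y) *ᵥ x := rfl

lemma expN_mul_pow (N : Matrix (Fin n) (Fin n) ℝ) (s : ℝ) (k : ℕ) :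
    exp (s • N) * N ^ k = N ^ k * exp (s • N) :=
  ((((Commute.refl N).pow_right k).smul_left s).exp_left).eq

lemma expN_mul (N : Matrix (Fin n) (Fin n) ℝ) (s : ℝ) :
    exp (s • N) * N = N * exp (s • N) := by
  simpa using expN_mul_pow N s 1

lemma exp_neg_mul_exp (N : Matrix (Fin n) (Fin n) ℝ) (c : ℝ) :
    exp ((-c) • N) * exp (c • N) = 1 := by
  rw [← Matrix.exp_add_of_commute _ _ (((Commute.refl N).smul_left _).smul_right _), ← add_smul,
    neg_add_cancel, zero_smul, exp_zero]

/-- If `(C * N^k) *ᵥ y = 0` for all `k`, the same holds after multiplying by any `exp (c • N)`. -/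
lemma shift {N : Matrix (Fin n) (Fin n) ℝ} {C : Matrix (Fin p) (Fin n) ℝ} {y : Fin n → ℝ}
    (hall : ∀ k : ℕ, (C * N ^ k) *ᵥ y = 0) (c : ℝ) (k : ℕ) :
    (C * N ^ k * exp (c • N)) *ᵥ y = 0 := by
  have hsum := expSeries_summable' (𝕂 := ℝ) (c • N)
  have hexp := congrFun (exp_eq_tsum (𝕂 := ℝ) (𝔸 := Matrix (Fin n) (Fin n) ℝ)) (c • N)
  calc (C * N ^ k * exp (c • N)) *ᵥ y = clm (C * N ^ k) y (exp (c • N)) := rfl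
    _ = 0 := by
        rw [hexp, (clm (C * N ^ k) y).map_tsum hsum, ← tsum_zero]
        exact tsum_congr fun m => by
          rw [smul_pow, (clm (C * N ^ k) y).map_smul, (clm (C * N ^ k) y).map_smul,
            clm_apply, Matrix.mul_assoc, ← pow_add, hall (k + m), smul_zero, smul_zero]

/-- Derivative bootstrap: vanishing of `(C * exp (s•N)) *ᵥ x` on an open interval forces
vanishing of all `(C * N^k * exp (s•N)) *ᵥ x` there. -/
lemma vanish_pows {N : Matrix (Fin n) (Fin n) ℝ} {C : Matrix (Fin p) (Fin n) ℝ} {x : Fin n → ℝ}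
    {a b : ℝ} (hvan : ∀ s ∈ Set.Ioo a b, (C * exp (s • N)) *ᵥ x = 0) :
    ∀ k : ℕ, ∀ s ∈ Set.Ioo a b, (C * N ^ k * exp (s • N)) *ᵥ x = 0 := by
  intro k
  induction k with
  | zero => intro s hs; simpa using hvan s hs
  | succ k ih =>
    intro s hs
    have hderiv : HasDerivAt (fun u : ℝ => clm (C * N ^ k) x (exp (u • N)))
        (clm (C * N ^ k) x (exp (s • N) * N)) s :=
      (clm (C * N ^ k) x).hasFDerivAt.comp_hasDerivAt s (hasDerivAt_exp_smul_const N s)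
    have heq : (fun _ : ℝ => (0 : Fin p → ℝ))
        =ᶠ[nhds s] (fun u => clm (C * N ^ k) x (exp (u • N))) := by
      filter_upwards [isOpen_Ioo.mem_nhds hs] with u hu
      exact (ih u hu).symm
    have hzero : clm (C * N ^ k) x (exp (s • N) * N) = 0 :=
      (hderiv.congr_of_eventuallyEq heq).unique (hasDerivAt_const s 0)
    calc (C * N ^ (k + 1) * exp (s • N)) *ᵥ x
        = clm (C * N ^ k) x (exp (s • N) * N) := by
          rw [clm_apply]
          conv_rhs => rw [expN_mul, ← Matrix.mul_assoc, Matrix.mul_assoc C, ← pow_succ]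
      _ = 0 := hzero

/-- From vanishing of `(C * exp (s•N)) *ᵥ x` on a nonempty open interval, deduce
`(C * N^k) *ᵥ x = 0` for all `k`. -/
lemma all_pows_of_vanish_Ioo {N : Matrix (Fin n) (Fin n) ℝ} {C : Matrix (Fin p) (Fin n) ℝ}
    {x : Fin n → ℝ} {a b : ℝ} (hab : a < b)
    (hvan : ∀ s ∈ Set.Ioo a b, (C * exp (s • N)) *ᵥ x = 0) (k : ℕ) :
    (C * N ^ k) *ᵥ x = 0 := by
  set s₀ : ℝ := (a + b) / 2 with hs₀def
  have hs₀ : s₀ ∈ Set.Ioo a b := ⟨by simp only [hs₀def]; linarith, by simp only [hs₀def]; linarith⟩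
  have hy : ∀ m : ℕ, (C * N ^ m) *ᵥ (exp (s₀ • N) *ᵥ x) = 0 := fun m => by
    rw [Matrix.mulVec_mulVec]
    exact vanish_pows hvan m s₀ hs₀
  have := shift hy (-s₀) k
  rwa [Matrix.mulVec_mulVec, Matrix.mul_assoc (C * N ^ k), exp_neg_mul_exp, Matrix.mul_one]
    at this

/-- Cayley–Hamilton: vanishing for `k < n` gives vanishing for all powers. -/
lemma all_pows_of_fin (hn : 0 < n) {N : Matrix (Fin n) (Fin n) ℝ} {C : Matrix (Fin p) (Fin n) ℝ}
    {x : Fin n → ℝ} (hlow : ∀ i : Fin n, (C * N ^ (i : ℕ)) *ᵥ x = 0) (k : ℕ) :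
    (C * N ^ k) *ᵥ x = 0 := by
  have hmonic := N.charpoly_monic
  have hnd : N.charpoly.natDegree = n := by
    simpa using N.charpoly_natDegree_eq_dim
  have hne : N.charpoly ≠ 1 := fun hcp => by
    rw [hcp, Polynomial.natDegree_one] at hnd; omega
  have hdeg : (Polynomial.X ^ k %ₘ N.charpoly).natDegree < n := by
    have := Polynomial.natDegree_modByMonic_lt (Polynomial.X ^ k) hmonic hne
    omega
  have hNk : N ^ k = ∑ i ∈ Finset.range n,
      (Polynomial.X ^ k %ₘ N.charpoly).coeff i • N ^ i := by
    rw [N.pow_eq_aeval_mod_charpoly k, Polynomial.aeval_eq_sum_range' hdeg]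
  rw [hNk, Matrix.mul_sum]
  have hsplit := map_sum (Matrix.mulVec.addMonoidHomLeft x)
    (fun a => C * ((Polynomial.X ^ k %ₘ N.charpoly).coeff a • N ^ a)) (Finset.range n)
  have h2 : (∑ a ∈ Finset.range n, C * ((Polynomial.X ^ k %ₘ N.charpoly).coeff a • N ^ a)) *ᵥ x
      = ∑ a ∈ Finset.range n, (C * ((Polynomial.X ^ k %ₘ N.charpoly).coeff a • N ^ a)) *ᵥ x :=
    hsplit
  rw [h2]
  refine Finset.sum_eq_zero fun i hi => ?_
  have hi' : i < n := Finset.mem_range.mp hi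
  show (C * ((Polynomial.X ^ k %ₘ N.charpoly).coeff i • N ^ i)) *ᵥ x = 0
  rw [Matrix.mul_smul, Matrix.smul_mulVec, hlow ⟨i, hi'⟩, smul_zero]



variable {n p : ℕ}

lemma dot_self_nonneg (v : Fin p → ℝ) : 0 ≤ v ⬝ᵥ v :=
  Finset.sum_nonneg fun i _ => mul_self_nonneg _

lemma quad (A' : Matrix (Fin n) (Fin n) ℝ) (M : Matrix (Fin n) (Fin p) ℝ) (s : ℝ)
    (x : Fin n → ℝ) :
    x ⬝ᵥ ((exp (s • A') * M * Mᵀ * exp (s • A'ᵀ)) *ᵥ x)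
      = ((Mᵀ * exp (s • A'ᵀ)) *ᵥ x) ⬝ᵥ ((Mᵀ * exp (s • A'ᵀ)) *ᵥ x) := by
  have hE : exp (s • A'ᵀ) = (exp (s • A'))ᵀ := by
    rw [← Matrix.transpose_smul, Matrix.exp_transpose]
  have h2 : (exp (s • A') * M)ᵀ = Mᵀ * exp (s • A'ᵀ) := by
    rw [Matrix.transpose_mul, hE]
  have h1 : exp (s • A') * M * Mᵀ * exp (s • A'ᵀ)
      = (exp (s • A') * M) * (exp (s • A') * M)ᵀ := by
    rw [h2, Matrix.mul_assoc (exp (s • A') * M)]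
  rw [h1, ← h2, ← Matrix.mulVec_mulVec, Matrix.dotProduct_mulVec, ← Matrix.mulVec_transpose]

lemma sym_integrand (A' : Matrix (Fin n) (Fin n) ℝ) (M : Matrix (Fin n) (Fin p) ℝ) (s : ℝ) :
    (exp (s • A') * M * Mᵀ * exp (s • A'ᵀ))ᵀ
      = exp (s • A') * M * Mᵀ * exp (s • A'ᵀ) := by
  have hE : (exp (s • A'))ᵀ = exp (s • A'ᵀ) := by
    rw [← Matrix.transpose_smul, Matrix.exp_transpose]
  have hE2 : (exp (s • A'ᵀ))ᵀ = exp (s • A') := by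
    rw [← Matrix.transpose_smul, Matrix.exp_transpose, Matrix.transpose_transpose]
  simp only [Matrix.transpose_mul, Matrix.transpose_transpose, hE, hE2, Matrix.mul_assoc]

end DelayGramian

open DelayGramian

/-- The controllability Gramian `G_T` of the delay system
`dx/dt = A x + B₁ u(t) + B₂ u(t-h)` is positive definite if and only if the columns of
the matrices `A^i B₁` and `A^i B₂`, `0 ≤ i ≤ n-1`, span `ℝⁿ` (Kalman rank condition). -/
theorem delay_gramian_posDef_iff_kalman
    {n p : ℕ} (hn : 0 < n) (hp : 0 < p)
    (A : Matrix (Fin n) (Fin n) ℝ) (B₁ B₂ : Matrix (Fin n) (Fin p) ℝ)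
    (h T : ℝ) (hh : 0 < h) (hhT : h < T)
    (B : Matrix (Fin n) (Fin p) ℝ) (hB : B = B₁ + NormedSpace.exp ((-h) • A) * B₂)
    (G : Matrix (Fin n) (Fin n) ℝ)
    (hG : G = (∫ t in (0:ℝ)..(T - h),
          NormedSpace.exp ((T - t) • A) * B * Bᵀ * NormedSpace.exp ((T - t) • Aᵀ))
        + ∫ t in (T - h)..T,
          NormedSpace.exp ((T - t) • A) * B₁ * B₁ᵀ * NormedSpace.exp ((T - t) • Aᵀ)) :
    G.PosDef ↔
      Submodule.span ℝ {v : Fin n → ℝ | ∃ i : Fin n, ∃ j : Fin p,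
        v = (A ^ (i : ℕ) * B₁)ᵀ j ∨ v = (A ^ (i : ℕ) * B₂)ᵀ j} = ⊤ := by
  classical
  set S : Set (Fin n → ℝ) := {v : Fin n → ℝ | ∃ i : Fin n, ∃ j : Fin p,
      v = (A ^ (i : ℕ) * B₁)ᵀ j ∨ v = (A ^ (i : ℕ) * B₂)ᵀ j} with hS
  -- continuity facts
  have hcontE : ∀ A' : Matrix (Fin n) (Fin n) ℝ,
      Continuous fun t : ℝ => exp ((T - t) • A') := fun A' =>
    exp_continuous.comp ((continuous_const.sub continuous_id).smul continuous_const)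
  have hcontI : ∀ M : Matrix (Fin n) (Fin p) ℝ,
      Continuous fun t : ℝ => exp ((T - t) • A) * M * Mᵀ * exp ((T - t) • Aᵀ) := fun M =>
    (((hcontE A).matrix_mul continuous_const).matrix_mul continuous_const).matrix_mul (hcontE Aᵀ)
  have hcontw : ∀ (M : Matrix (Fin n) (Fin p) ℝ) (x : Fin n → ℝ),
      Continuous fun t : ℝ => (Mᵀ * exp ((T - t) • Aᵀ)) *ᵥ x := by
    intro M x
    have : (fun t : ℝ => (Mᵀ * exp ((T - t) • Aᵀ)) *ᵥ x)
        = fun t => clm Mᵀ x (exp ((T - t) • Aᵀ)) := by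
      funext t; rw [clm_apply]
    rw [this]
    exact (clm Mᵀ x).continuous.comp (hcontE Aᵀ)
  have hcontf : ∀ (M : Matrix (Fin n) (Fin p) ℝ) (x : Fin n → ℝ),
      Continuous fun t : ℝ =>
        ((Mᵀ * exp ((T - t) • Aᵀ)) *ᵥ x) ⬝ᵥ ((Mᵀ * exp ((T - t) • Aᵀ)) *ᵥ x) := by
    intro M x
    exact continuous_finset_sum Finset.univ fun j _ =>
      ((continuous_apply j).comp (hcontw M x)).mul ((continuous_apply j).comp (hcontw M x))
  -- quadratic form formula
  have hq : ∀ x : Fin n → ℝ, x ⬝ᵥ (G *ᵥ x)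
      = (∫ t in (0:ℝ)..(T - h),
          ((Bᵀ * exp ((T - t) • Aᵀ)) *ᵥ x) ⬝ᵥ ((Bᵀ * exp ((T - t) • Aᵀ)) *ᵥ x))
        + ∫ t in (T - h)..T,
          ((B₁ᵀ * exp ((T - t) • Aᵀ)) *ᵥ x) ⬝ᵥ ((B₁ᵀ * exp ((T - t) • Aᵀ)) *ᵥ x) := by
    intro x
    set Φ : Matrix (Fin n) (Fin n) ℝ →L[ℝ] ℝ := LinearMap.toContinuousLinearMap
      { toFun := fun Y => x ⬝ᵥ (Y *ᵥ x)
        map_add' := fun Y Z => by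
          show x ⬝ᵥ ((Y + Z) *ᵥ x) = x ⬝ᵥ (Y *ᵥ x) + x ⬝ᵥ (Z *ᵥ x)
          rw [Matrix.add_mulVec, dotProduct_add]
        map_smul' := fun c Y => by
          show x ⬝ᵥ ((c • Y) *ᵥ x) = c • (x ⬝ᵥ (Y *ᵥ x))
          rw [Matrix.smul_mulVec, dotProduct_smul] } with hΦdef
    have hΦ : ∀ Y, Φ Y = x ⬝ᵥ (Y *ᵥ x) := fun _ => rfl
    rw [hG, Matrix.add_mulVec, dotProduct_add]
    congr 1
    · rw [← hΦ]; erw [← Φ.intervalIntegral_comp_comm ((hcontI B).intervalIntegrable _ _)]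
      exact intervalIntegral.integral_congr fun t _ => by erw [hΦ]; exact quad A B (T - t) x
    · rw [← hΦ]; erw [← Φ.intervalIntegral_comp_comm ((hcontI B₁).intervalIntegrable _ _)]
      exact intervalIntegral.integral_congr fun t _ => by erw [hΦ]; exact quad A B₁ (T - t) x
  -- symmetry of G
  have hherm : G.IsHermitian := by
    have hsym : Gᵀ = G := by
      set Ψ : Matrix (Fin n) (Fin n) ℝ →L[ℝ] Matrix (Fin n) (Fin n) ℝ :=
        LinearMap.toContinuousLinearMap
          { toFun := fun Y => Yᵀ
            map_add' := fun Y Z => Matrix.transpose_add Y Z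
            map_smul' := fun c Y => Matrix.transpose_smul c Y } with hΨdef
      have hΨ : ∀ Y : Matrix (Fin n) (Fin n) ℝ, Ψ Y = Yᵀ := fun _ => rfl
      calc Gᵀ = Ψ G := rfl
        _ = G := by
          rw [hG, map_add]; erw [← Ψ.intervalIntegral_comp_comm ((hcontI B).intervalIntegrable _ _),
            ← Ψ.intervalIntegral_comp_comm ((hcontI B₁).intervalIntegrable _ _)]
          congr 1
          · exact intervalIntegral.integral_congr fun t _ => by
              erw [hΨ]; exact sym_integrand A B (T - t)
          · exact intervalIntegral.integral_congr fun t _ => by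
              erw [hΨ]; exact sym_integrand A B₁ (T - t)
    exact (Matrix.conjTranspose_eq_transpose_of_trivial G).trans hsym
  -- transpose of B
  have hBt : Bᵀ = B₁ᵀ + B₂ᵀ * exp ((-h) • Aᵀ) := by
    rw [hB, Matrix.transpose_add, Matrix.transpose_mul, ← Matrix.exp_transpose,
      Matrix.transpose_smul]
  -- zero integral of nonneg continuous functions
  have key : ∀ (g : ℝ → ℝ) (a b : ℝ), a < b → Continuous g → (∀ u, 0 ≤ g u) →
      (∫ u in a..b, g u) = 0 → ∀ u ∈ Set.Ioo a b, g u = 0 := by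
    intro g a b hab hc hnn hz u hu
    by_contra hne
    have hpos : 0 < g u := lt_of_le_of_ne (hnn u) (Ne.symm hne)
    exact (intervalIntegral.integral_pos hab hc.continuousOn (fun v _ => hnn v)
      ⟨u, Set.mem_Icc_of_Ioo hu, hpos⟩).ne' hz
  constructor
  · -- PosDef → span = ⊤
    intro hpd
    by_contra hspan
    obtain ⟨φ, hφne, hφbot⟩ := Submodule.exists_dual_map_eq_bot_of_lt_top
      (lt_top_iff_ne_top.mpr hspan) inferInstance
    set x : Fin n → ℝ := fun i => φ (Pi.single i 1) with hxdef
    have hφx : ∀ v, φ v = x ⬝ᵥ v := by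
      intro v
      have hv' : ∑ i : Fin n, v i • (Pi.single i 1 : Fin n → ℝ) = v := by
        simp_rw [← Pi.single_smul, smul_eq_mul, mul_one]
        exact Finset.univ_sum_single v
      calc φ v = φ (∑ i : Fin n, v i • (Pi.single i 1 : Fin n → ℝ)) := by rw [hv']
        _ = ∑ i, v i * x i := by rw [map_sum]; simp [hxdef]
        _ = v ⬝ᵥ x := rfl
        _ = x ⬝ᵥ v := dotProduct_comm v x
    have hx0 : x ≠ 0 := by
      intro h0
      apply hφne
      apply LinearMap.ext
      intro v
      rw [hφx v, h0]
      simp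
    have hSperp : ∀ v ∈ S, x ⬝ᵥ v = 0 := fun v hv => by
      have hmem : φ v ∈ (Submodule.span ℝ S).map φ :=
        Submodule.mem_map_of_mem (Submodule.subset_span hv)
      rw [hφbot] at hmem
      rw [← hφx v]
      simpa using hmem
    have hlow : ∀ (M : Matrix (Fin n) (Fin p) ℝ),
        (∀ (i : Fin n) (j : Fin p), ((A ^ (i:ℕ) * M)ᵀ j) ∈ S) →
        ∀ i : Fin n, (Mᵀ * Aᵀ ^ (i:ℕ)) *ᵥ x = 0 := by
      intro M hMS i
      funext j
      show ((Mᵀ * Aᵀ ^ (i:ℕ)) *ᵥ x) j = 0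
      rw [← Matrix.transpose_pow, ← Matrix.transpose_mul]
      exact (dotProduct_comm ((A ^ (i:ℕ) * M)ᵀ j) x).trans (hSperp _ (hMS i j))
    have hall₁ : ∀ k : ℕ, (B₁ᵀ * Aᵀ ^ k) *ᵥ x = 0 :=
      all_pows_of_fin hn (hlow B₁ fun i j => ⟨i, j, Or.inl rfl⟩)
    have hall₂ : ∀ k : ℕ, (B₂ᵀ * Aᵀ ^ k) *ᵥ x = 0 :=
      all_pows_of_fin hn (hlow B₂ fun i j => ⟨i, j, Or.inr rfl⟩)
    have hw₁ : ∀ c : ℝ, (B₁ᵀ * exp (c • Aᵀ)) *ᵥ x = 0 := fun c => by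
      have := shift hall₁ c 0
      rwa [pow_zero, Matrix.mul_one] at this
    have hw₂ : ∀ c : ℝ, (B₂ᵀ * exp (c • Aᵀ)) *ᵥ x = 0 := fun c => by
      have := shift hall₂ c 0
      rwa [pow_zero, Matrix.mul_one] at this
    have hwB : ∀ c : ℝ, (Bᵀ * exp (c • Aᵀ)) *ᵥ x = 0 := fun c => by
      rw [hBt, Matrix.add_mul, Matrix.add_mulVec, hw₁ c, zero_add, Matrix.mul_assoc,
        ← Matrix.exp_add_of_commute _ _ (((Commute.refl Aᵀ).smul_left _).smul_right _), ← add_smul]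
      exact hw₂ (-h + c)
    have hq0 : x ⬝ᵥ (G *ᵥ x) = 0 := by
      rw [hq x]
      have e1 : (∫ t in (0:ℝ)..(T - h),
          ((Bᵀ * exp ((T - t) • Aᵀ)) *ᵥ x) ⬝ᵥ ((Bᵀ * exp ((T - t) • Aᵀ)) *ᵥ x))
          = ∫ t in (0:ℝ)..(T - h), (0:ℝ) := by
        refine intervalIntegral.integral_congr fun t _ => ?_
        rw [hwB (T - t), dotProduct_zero]
      have e2 : (∫ t in (T - h)..T,
          ((B₁ᵀ * exp ((T - t) • Aᵀ)) *ᵥ x) ⬝ᵥ ((B₁ᵀ * exp ((T - t) • Aᵀ)) *ᵥ x))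
          = ∫ t in (T - h)..T, (0:ℝ) := by
        refine intervalIntegral.integral_congr fun t _ => ?_
        rw [hw₁ (T - t), dotProduct_zero]
      rw [e1, e2]
      simp
    have hstar : star x = x := by
      funext i; exact star_trivial _
    have := hpd.dotProduct_mulVec_pos hx0
    rw [hstar, hq0] at this
    exact lt_irrefl 0 this
  · -- span = ⊤ → PosDef
    intro hspan
    refine Matrix.PosDef.of_dotProduct_mulVec_pos hherm fun x hx0 => ?_
    have hstar : star x = x := by funext i; exact star_trivial _
    rw [hstar]
    set I₁ : ℝ := ∫ t in (0:ℝ)..(T - h),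
        ((Bᵀ * exp ((T - t) • Aᵀ)) *ᵥ x) ⬝ᵥ ((Bᵀ * exp ((T - t) • Aᵀ)) *ᵥ x) with hI₁
    set I₂ : ℝ := ∫ t in (T - h)..T,
        ((B₁ᵀ * exp ((T - t) • Aᵀ)) *ᵥ x) ⬝ᵥ ((B₁ᵀ * exp ((T - t) • Aᵀ)) *ᵥ x) with hI₂
    have h1 : 0 ≤ I₁ := intervalIntegral.integral_nonneg (by linarith)
      (fun u _ => dot_self_nonneg _)
    have h2 : 0 ≤ I₂ := intervalIntegral.integral_nonneg (by linarith)
      (fun u _ => dot_self_nonneg _)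
    have hqx : x ⬝ᵥ (G *ᵥ x) = I₁ + I₂ := hq x
    rw [hqx]
    rcases lt_or_eq_of_le (add_nonneg h1 h2) with hlt | heq
    · exact hlt
    exfalso
    have hI₁0 : I₁ = 0 := by linarith
    have hI₂0 : I₂ = 0 := by linarith
    -- from the second integral : B₁ᵀ exp(s Aᵀ) x = 0 for s ∈ (0, h)
    have hvan₂ : ∀ s ∈ Set.Ioo (0:ℝ) h, (B₁ᵀ * exp (s • Aᵀ)) *ᵥ x = 0 := by
      intro s hs
      have ht : T - s ∈ Set.Ioo (T - h) T := ⟨by linarith [hs.2], by linarith [hs.1]⟩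
      have h0 := key _ (T - h) T (by linarith) (hcontf B₁ x) (fun u => dot_self_nonneg _)
        hI₂0 (T - s) ht
      have h1 : (B₁ᵀ * exp ((T - (T - s)) • Aᵀ)) *ᵥ x = 0 := dotProduct_self_eq_zero.mp h0
      rwa [sub_sub_cancel] at h1
    have hall₁ : ∀ k : ℕ, (B₁ᵀ * Aᵀ ^ k) *ᵥ x = 0 :=
      all_pows_of_vanish_Ioo hh hvan₂
    have hvanB : ∀ s ∈ Set.Ioo h T, (Bᵀ * exp (s • Aᵀ)) *ᵥ x = 0 := by
      intro s hs
      have ht : T - s ∈ Set.Ioo (0:ℝ) (T - h) := ⟨by linarith [hs.2], by linarith [hs.1]⟩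
      have h0 := key _ (0:ℝ) (T - h) (by linarith) (hcontf B x) (fun u => dot_self_nonneg _)
        hI₁0 (T - s) ht
      have h1 : (Bᵀ * exp ((T - (T - s)) • Aᵀ)) *ᵥ x = 0 := dotProduct_self_eq_zero.mp h0
      rwa [sub_sub_cancel] at h1
    have hallB : ∀ k : ℕ, (Bᵀ * Aᵀ ^ k) *ᵥ x = 0 :=
      all_pows_of_vanish_Ioo hhT hvanB
    have hall₂pre : ∀ k : ℕ, (B₂ᵀ * Aᵀ ^ k * exp ((-h) • Aᵀ)) *ᵥ x = 0 := by
      intro k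
      have h1 := hallB k
      rw [hBt, Matrix.add_mul, Matrix.add_mulVec, hall₁ k, zero_add,
        Matrix.mul_assoc B₂ᵀ, expN_mul_pow, ← Matrix.mul_assoc B₂ᵀ] at h1
      exact h1
    have hy : ∀ k : ℕ, (B₂ᵀ * Aᵀ ^ k) *ᵥ (exp ((-h) • Aᵀ) *ᵥ x) = 0 := fun k => by
      rw [Matrix.mulVec_mulVec]; exact hall₂pre k
    have hall₂ : ∀ k : ℕ, (B₂ᵀ * Aᵀ ^ k) *ᵥ x = 0 := by
      intro k
      have hsh := shift hy h k
      rw [Matrix.mulVec_mulVec, Matrix.mul_assoc (B₂ᵀ * Aᵀ ^ k)] at hsh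
      have hee : exp (h • Aᵀ) * exp ((-h) • Aᵀ) = 1 := by
        have := exp_neg_mul_exp Aᵀ (-h)
        rwa [neg_neg] at this
      rwa [hee, Matrix.mul_one] at hsh
    have hSx : ∀ v ∈ S, x ⬝ᵥ v = 0 := by
      rintro v ⟨i, j, hv | hv⟩ <;> subst hv
      · have h0 : ((A ^ (i:ℕ) * B₁)ᵀ *ᵥ x) j = 0 := by
          rw [Matrix.transpose_mul, Matrix.transpose_pow]
          exact congrFun (hall₁ i) j
        exact (dotProduct_comm x _).trans h0
      · have h0 : ((A ^ (i:ℕ) * B₂)ᵀ *ᵥ x) j = 0 := by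
          rw [Matrix.transpose_mul, Matrix.transpose_pow]
          exact congrFun (hall₂ i) j
        exact (dotProduct_comm x _).trans h0
    have hker : Submodule.span ℝ S ≤ LinearMap.ker
        ({ toFun := fun v => x ⬝ᵥ v
           map_add' := fun a b => dotProduct_add x a b
           map_smul' := fun c a => by simp } : (Fin n → ℝ) →ₗ[ℝ] ℝ) :=
      Submodule.span_le.mpr fun v hv => LinearMap.mem_ker.mpr (hSx v hv)
    have hxmem : x ∈ Submodule.span ℝ S := hspan.symm ▸ Submodule.mem_top
    have hxker := hker hxmem
    have hxx : x ⬝ᵥ x = 0 := LinearMap.mem_ker.mp hxker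
    exact hx0 (dotProduct_self_eq_zero.mp hxx)
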